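/- arXiv:2203.07430 — 2 statements merged into one kernel-verified Lean document; each statement's English description precedes it below -/
import Mathlib

section
/- Let μ : ℝ^{n_z} → ℝ be differentiable with gradient satisfying J̲ ≤ ∇μ(z)ᵀ ≤ J̄ entrywise, and suppose each partial derivative has constant sign (JSS). Let μ_d(z₁,z₂) = μ(Dz₁ + (I−D)z₂) be the tight decomposition function with D selecting the nondecreasing coordinates. Then for any z̲ ≤ z̄, the inequality μ_d(z̄, z̲) − μ_d(z̲, z̄) ≤ F̄ (z̄ − z̲) holds, where F̄ := (J̄)⁺ + (J̲)⁻ is the row vector with entries max(J̄_j, 0) + max(−J̲_j, 0). -/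
/-- The selection map `D z₁ + (I − D) z₂` where `D` is the binary diagonal matrix
with `D_{jj} = 1` iff `j ∈ S` (the set of nondecreasing coordinates). -/
def sel {n : ℕ} (S : Set (Fin n)) [DecidablePred (· ∈ S)] (z₁ z₂ : Fin n → ℝ) : Fin n → ℝ :=
  fun j => if j ∈ S then z₁ j else z₂ j

theorem stmt5 {n : ℕ} (μ : (Fin n → ℝ) → ℝ) (hdiff : Differentiable ℝ μ)
    (Jlo Jhi : Fin n → ℝ)
    (hJ : ∀ z (j : Fin n), Jlo j ≤ fderiv ℝ μ z (Pi.single j 1) ∧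
      fderiv ℝ μ z (Pi.single j 1) ≤ Jhi j)
    -- Jacobian sign-stability: `S` collects the nondecreasing coordinates
    (S : Set (Fin n)) [DecidablePred (· ∈ S)]
    (hpos : ∀ z, ∀ j ∈ S, 0 ≤ fderiv ℝ μ z (Pi.single j 1))
    (hneg : ∀ z, ∀ j ∉ S, fderiv ℝ μ z (Pi.single j 1) ≤ 0) :
    ∀ zlo zhi : Fin n → ℝ, zlo ≤ zhi →
      μ (sel S zhi zlo) - μ (sel S zlo zhi) ≤
        ∑ j, (max (Jhi j) 0 + max (-(Jlo j)) 0) * (zhi j - zlo j) := by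
  intro zlo zhi hle
  set a := sel S zhi zlo with ha
  set b := sel S zlo zhi with hb
  set v : Fin n → ℝ := a - b with hv
  -- derivative of the path t ↦ μ (b + t • v)
  have hg : ∀ t : ℝ, HasDerivAt (fun t : ℝ => μ (b + t • v))
      (fderiv ℝ μ (b + t • v) v) t := by
    intro t
    have h1 : HasDerivAt (fun t : ℝ => b + t • v) v t := by
      simpa using ((hasDerivAt_id t).smul_const v).const_add b
    exact (hdiff (b + t • v)).hasFDerivAt.comp_hasDerivAt t h1
  obtain ⟨c, _, hc⟩ := exists_hasDerivAt_eq_slope (fun t : ℝ => μ (b + t • v))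
      (fun t => fderiv ℝ μ (b + t • v) v) (by norm_num : (0:ℝ) < 1)
      (fun t _ => (hg t).continuousAt.continuousWithinAt) (fun t _ => hg t)
  have hba : b + (1:ℝ) • v = a := by
    funext i; simp [hv]
  have hb0 : b + (0:ℝ) • v = b := by simp
  rw [hba, hb0] at hc
  have hmain : μ a - μ b = fderiv ℝ μ (b + c • v) v := by
    rw [hc]; ring
  rw [hmain]
  -- expand fderiv applied to v as a sum
  set z := b + c • v with hz
  have hvsum : v = ∑ j, (v j) • (Pi.single j 1 : Fin n → ℝ) := by
    funext i
    simp only [Finset.sum_apply, Pi.smul_apply, Pi.single_apply, smul_eq_mul,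
      mul_ite, mul_one, mul_zero]
    rw [Finset.sum_ite_eq Finset.univ i (fun j => v j)]
    simp
  have hexp : fderiv ℝ μ z v = ∑ j, v j * fderiv ℝ μ z (Pi.single j 1) := by
    conv_lhs => rw [hvsum]
    rw [map_sum]
    simp [smul_eq_mul]
  rw [hexp]
  apply Finset.sum_le_sum
  intro j _
  have hJj := hJ z j
  have hd : 0 ≤ zhi j - zlo j := by have := hle j; linarith
  have h1 : (0:ℝ) ≤ max (Jhi j) 0 := le_max_right _ _
  have h2 : (0:ℝ) ≤ max (-(Jlo j)) 0 := le_max_right _ _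
  have h3 : Jhi j ≤ max (Jhi j) 0 := le_max_left _ _
  have h4 : -(Jlo j) ≤ max (-(Jlo j)) 0 := le_max_left _ _
  by_cases hjS : j ∈ S
  · have hvj : v j = zhi j - zlo j := by simp [hv, ha, hb, sel, hjS]
    have hD := hpos z j hjS
    rw [hvj]
    nlinarith [hJj.2]
  · have hvj : v j = -(zhi j - zlo j) := by simp [hv, ha, hb, sel, hjS]
    have hD := hneg z j hjS
    rw [hvj]
    nlinarith [hJj.1]
end

section
/- Let φ_d and ψ_d be DT mixed-monotone decomposition functions of φ : ℝ^n × ℝ^{n_w} → ℝ^n and ψ : ℝ^n × ℝ^{n_v} → ℝ^l respectively, and L ∈ ℝ^{n×l}. Then f_{νd}((x₁,w₁,v₁),(x₂,w₂,v₂)) := φ_d(x₁,w₁,x₂,w₂) − L⁺ ψ_d(x₂,v₂,x₁,v₁) + L⁻ ψ_d(x₁,v₁,x₂,v₂) is a DT mixed-monotone decomposition function of f_ν(x,w,v) := φ(x,w) − Lψ(x,v). -/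
open Matrix

/-- Entrywise positive part of a matrix: `M⁺ = max(M, 0)`. -/
def mpos {m n : ℕ} (M : Matrix (Fin m) (Fin n) ℝ) : Matrix (Fin m) (Fin n) ℝ :=
  fun i j => max (M i j) 0

/-- Entrywise negative part of a matrix: `M⁻ = M⁺ − M`. -/
def mneg {m n : ℕ} (M : Matrix (Fin m) (Fin n) ℝ) : Matrix (Fin m) (Fin n) ℝ :=
  mpos M - M

/-- `gd` is a DT mixed-monotone decomposition function of `g` (on the whole space):
agreement on the diagonal, componentwise nondecreasing in the first argument,
componentwise nonincreasing in the second argument. -/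
def IsDTDecomp {α β : Type*} [Preorder α] [Preorder β] (g : α → β) (gd : α → α → β) : Prop :=
  (∀ z, gd z z = g z) ∧
  (∀ z₁ z₁' z₂, z₁ ≤ z₁' → gd z₁ z₂ ≤ gd z₁' z₂) ∧
  (∀ z₁ z₂ z₂', z₂ ≤ z₂' → gd z₁ z₂' ≤ gd z₁ z₂)

lemma mulVec_mono' {m n : ℕ} (M : Matrix (Fin m) (Fin n) ℝ)
    (hM : ∀ i j, 0 ≤ M i j) {u v : Fin n → ℝ} (h : u ≤ v) :
    M *ᵥ u ≤ M *ᵥ v := by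
  intro i
  simp only [mulVec, dotProduct]
  exact Finset.sum_le_sum fun j _ => mul_le_mul_of_nonneg_left (h j) (hM i j)

lemma mpos_nonneg {m n : ℕ} (M : Matrix (Fin m) (Fin n) ℝ) : ∀ i j, 0 ≤ mpos M i j :=
  fun i j => le_max_right _ _

lemma mneg_nonneg {m n : ℕ} (M : Matrix (Fin m) (Fin n) ℝ) : ∀ i j, 0 ≤ mneg M i j := by
  intro i j
  simp [mneg, mpos]

theorem stmt8 {n l nw nv : ℕ}
    (φ : (Fin n → ℝ) × (Fin nw → ℝ) → Fin n → ℝ)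
    (φd : ((Fin n → ℝ) × (Fin nw → ℝ)) → ((Fin n → ℝ) × (Fin nw → ℝ)) → Fin n → ℝ)
    (ψ : (Fin n → ℝ) × (Fin nv → ℝ) → Fin l → ℝ)
    (ψd : ((Fin n → ℝ) × (Fin nv → ℝ)) → ((Fin n → ℝ) × (Fin nv → ℝ)) → Fin l → ℝ)
    (L : Matrix (Fin n) (Fin l) ℝ)
    (hφ : IsDTDecomp φ φd) (hψ : IsDTDecomp ψ ψd) :
    IsDTDecomp
      (fun p : (Fin n → ℝ) × (Fin nw → ℝ) × (Fin nv → ℝ) =>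
        φ (p.1, p.2.1) - L *ᵥ ψ (p.1, p.2.2))
      (fun p q =>
        φd (p.1, p.2.1) (q.1, q.2.1)
          - mpos L *ᵥ ψd (q.1, q.2.2) (p.1, p.2.2)
          + mneg L *ᵥ ψd (p.1, p.2.2) (q.1, q.2.2)) := by
  obtain ⟨hφ0, hφ1, hφ2⟩ := hφ
  obtain ⟨hψ0, hψ1, hψ2⟩ := hψ
  refine ⟨?_, ?_, ?_⟩
  · intro z
    have hL : mpos L - mneg L = L := by simp [mneg, sub_sub_cancel]
    simp only []
    rw [hφ0, hψ0]
    have : mpos L *ᵥ ψ (z.1, z.2.2) - mneg L *ᵥ ψ (z.1, z.2.2) = L *ᵥ ψ (z.1, z.2.2) := by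
      rw [← sub_mulVec, hL]
    rw [← this]
    abel
  · intro p p' q hp
    have h1 : p.1 ≤ p'.1 := hp.1
    have h2 : p.2.1 ≤ p'.2.1 := hp.2.1
    have h3 : p.2.2 ≤ p'.2.2 := hp.2.2
    refine add_le_add (sub_le_sub ?_ ?_) ?_
    · exact hφ1 _ _ _ ⟨h1, h2⟩
    · exact mulVec_mono' _ (mpos_nonneg L) (hψ2 _ _ _ ⟨h1, h3⟩)
    · exact mulVec_mono' _ (mneg_nonneg L) (hψ1 _ _ _ ⟨h1, h3⟩)
  · intro p q q' hq
    have h1 : q.1 ≤ q'.1 := hq.1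
    have h2 : q.2.1 ≤ q'.2.1 := hq.2.1
    have h3 : q.2.2 ≤ q'.2.2 := hq.2.2
    refine add_le_add (sub_le_sub ?_ ?_) ?_
    · exact hφ2 _ _ _ ⟨h1, h2⟩
    · exact mulVec_mono' _ (mpos_nonneg L) (hψ1 _ _ _ ⟨h1, h3⟩)
    · exact mulVec_mono' _ (mneg_nonneg L) (hψ2 _ _ _ ⟨h1, h3⟩)
end
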